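/- Let A, B, T > 0, let a > 0, let b ∈ (0,1), and let β ∈ (0,a). Then there exists a constant C > 0 such that for all t ∈ (0,T] and all δ ∈ (0,1], ∫₀^t min( A s^{−1} δ^a , B s^{−b} ) ds ≤ C δ^β. -/

import Mathlib

open MeasureTheory Set

/-- Let `A, B, T > 0`, `a > 0`, `b ∈ (0,1)`, `β ∈ (0,a)`.  Then there exists `C > 0` such
that for all `t ∈ (0,T]` and `δ ∈ (0,1]`,
`∫₀ᵗ min(A s⁻¹ δ^a, B s^{−b}) ds ≤ C δ^β`,
the integral being the Lebesgue integral over `s ∈ (0,t)`. -/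
theorem statement2
    (A B T a b β : ℝ)
    (hA : 0 < A) (hB : 0 < B) (hT : 0 < T)
    (ha : 0 < a) (hb : b ∈ Set.Ioo (0 : ℝ) 1) (hβ : β ∈ Set.Ioo 0 a) :
    ∃ C : ℝ, 0 < C ∧ ∀ t ∈ Set.Ioc (0 : ℝ) T, ∀ δ ∈ Set.Ioc (0 : ℝ) 1,
      (∫ s in Set.Ioo (0 : ℝ) t, min (A * s⁻¹ * δ ^ a) (B * s ^ (-b))) ≤ C * δ ^ β := by
  set θ : ℝ := β / a with hθdef
  have hθ0 : 0 < θ := div_pos hβ.1 ha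
  have hθ1 : θ < 1 := (div_lt_one ha).2 hβ.2
  set e : ℝ := θ + b * (1 - θ) with hedef
  have he0 : 0 < e := by
    have : 0 ≤ b * (1 - θ) := mul_nonneg hb.1.le (by linarith)
    linarith
  have he1 : e < 1 := by
    have h1 : b * (1 - θ) < 1 * (1 - θ) :=
      mul_lt_mul_of_pos_right hb.2 (by linarith)
    simp only [hedef]; nlinarith
  set K : ℝ := A ^ θ * B ^ (1 - θ) with hKdef
  have hK0 : 0 < K := mul_pos (Real.rpow_pos_of_pos hA _) (Real.rpow_pos_of_pos hB _)
  have hTe : 0 < T ^ (1 - e) := Real.rpow_pos_of_pos hT _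
  refine ⟨K * (T ^ (1 - e) / (1 - e)), mul_pos hK0 (div_pos hTe (by linarith)), ?_⟩
  rintro t ⟨ht0, htT⟩ δ ⟨hδ0, hδ1⟩
  -- the dominating function
  set g : ℝ → ℝ := fun s => K * δ ^ β * s ^ (-e) with hgdef
  have hgint : IntegrableOn g (Ioo 0 t) := by
    apply Integrable.const_mul
    have : IntervalIntegrable (fun s : ℝ => s ^ (-e)) volume 0 t :=
      intervalIntegral.intervalIntegrable_rpow' (by linarith)
    have h2 := (intervalIntegrable_iff_integrableOn_Ioc_of_le ht0.le).1 this
    exact h2.mono_set Ioo_subset_Ioc_self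
  -- pointwise bound
  have hbound : ∀ s ∈ Ioo (0 : ℝ) t,
      min (A * s⁻¹ * δ ^ a) (B * s ^ (-b)) ≤ g s := by
    intro s hs
    have hs0 : 0 < s := hs.1
    set x : ℝ := A * s⁻¹ * δ ^ a with hxdef
    set y : ℝ := B * s ^ (-b) with hydef
    have hx0 : 0 < x := by positivity
    have hy0 : 0 < y := by positivity
    have hm0 : 0 < min x y := lt_min hx0 hy0
    have key : min x y ≤ x ^ θ * y ^ (1 - θ) := by
      have : min x y = (min x y) ^ θ * (min x y) ^ (1 - θ) := by
        rw [← Real.rpow_add hm0]; simp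
      rw [this]
      exact mul_le_mul (Real.rpow_le_rpow hm0.le (min_le_left _ _) hθ0.le)
        (Real.rpow_le_rpow hm0.le (min_le_right _ _) (by linarith))
        (Real.rpow_nonneg hm0.le _) (Real.rpow_nonneg hx0.le _)
    refine key.trans (le_of_eq ?_)
    have hxθ : x ^ θ = A ^ θ * δ ^ β * s ^ (-θ) := by
      rw [hxdef, Real.mul_rpow (by positivity) (by positivity),
        Real.mul_rpow hA.le (by positivity), Real.inv_rpow hs0.le,
        ← Real.rpow_neg hs0.le, ← Real.rpow_mul hδ0.le]
      have : a * θ = β := by rw [hθdef]; field_simp [ha.ne']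
      rw [this]; ring_nf
    have hyθ : y ^ (1 - θ) = B ^ (1 - θ) * s ^ (-(b * (1 - θ))) := by
      rw [hydef, Real.mul_rpow hB.le (by positivity), ← Real.rpow_mul hs0.le]
      ring_nf
    rw [hxθ, hyθ, hgdef, hKdef]
    have : s ^ (-θ) * s ^ (-(b * (1 - θ))) = s ^ (-e) := by
      rw [← Real.rpow_add hs0, hedef]; ring_nf
    calc A ^ θ * δ ^ β * s ^ (-θ) * (B ^ (1 - θ) * s ^ (-(b * (1 - θ))))
        = A ^ θ * B ^ (1 - θ) * δ ^ β * (s ^ (-θ) * s ^ (-(b * (1 - θ)))) := by ring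
      _ = A ^ θ * B ^ (1 - θ) * δ ^ β * s ^ (-e) := by rw [this]
  -- the min function is integrable
  have hmeas : AEStronglyMeasurable (fun s : ℝ => min (A * s⁻¹ * δ ^ a) (B * s ^ (-b)))
      (volume.restrict (Ioo (0 : ℝ) t)) := by
    have : Measurable fun s : ℝ => min (A * s⁻¹ * δ ^ a) (B * s ^ (-b)) := by fun_prop
    exact this.aestronglyMeasurable
  have hfint : IntegrableOn (fun s : ℝ => min (A * s⁻¹ * δ ^ a) (B * s ^ (-b))) (Ioo 0 t) := by
    refine Integrable.mono' hgint hmeas ?_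
    filter_upwards [ae_restrict_mem measurableSet_Ioo] with s hs
    have hs0 : 0 < s := hs.1
    have h1 : 0 < min (A * s⁻¹ * δ ^ a) (B * s ^ (-b)) := by
      apply lt_min <;> positivity
    rw [Real.norm_of_nonneg h1.le]
    exact hbound s hs
  calc (∫ s in Ioo (0 : ℝ) t, min (A * s⁻¹ * δ ^ a) (B * s ^ (-b)))
      ≤ ∫ s in Ioo (0 : ℝ) t, g s :=
        setIntegral_mono_on hfint hgint measurableSet_Ioo hbound
    _ = K * δ ^ β * ∫ s in Ioo (0 : ℝ) t, s ^ (-e) := by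
        simp only [hgdef]; rw [integral_const_mul]
    _ ≤ K * δ ^ β * (T ^ (1 - e) / (1 - e)) := by
        apply mul_le_mul_of_nonneg_left _ (by positivity)
        have hval : (∫ s in Ioo (0 : ℝ) t, s ^ (-e)) = t ^ (1 - e) / (1 - e) := by
          rw [← integral_Ioc_eq_integral_Ioo,
            ← intervalIntegral.integral_of_le ht0.le,
            integral_rpow (Or.inl (by linarith))]
          rw [Real.zero_rpow (by linarith)]
          norm_num
          ring_nf
        rw [hval]
        apply div_le_div_of_nonneg_right _ (by linarith)
        · exact Real.rpow_le_rpow ht0.le htT (by linarith)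
    _ ≤ K * (T ^ (1 - e) / (1 - e)) * δ ^ β := by
        ring_nf
        exact le_refl _
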